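/- Fix a positive integer a. Suppose that for every coloring c : ℕ → Fin 2 there exists an infinite apart set H ⊆ ℕ such that FS^{{a, 2a, 3a}}(H) is monochromatic under c. Then for every coloring c : ℕ → Fin 2 there exists an infinite set H' ⊆ ℕ of positive integers such that FS^{≤3}(H') (all sums of at most 3 distinct elements of H') is monochromatic under c. -/
import Mathlib


/-- `lam n` is the least exponent in the binary expansion of `n`
(the 2-adic valuation of `n`). -/
def lam (n : ℕ) : ℕ := padicValNat 2 n

/-- `mu n` is the greatest exponent in the binary expansion of `n`. -/
def mu (n : ℕ) : ℕ := Nat.log 2 n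

/-- A set `X` of positive integers is apart if for all `x < x'` in `X`,
`μ(x) < λ(x')`. -/
def ApartSet (X : Set ℕ) : Prop :=
  (∀ x ∈ X, 0 < x) ∧ ∀ x ∈ X, ∀ y ∈ X, x < y → mu x < lam y

/-- `FSeq j B` is the set of sums of `j` distinct elements of `B`. -/
def FSeq (j : ℕ) (B : Set ℕ) : Set ℕ :=
  {n | ∃ F : Finset ℕ, ↑F ⊆ B ∧ F.card = j ∧ ∑ x ∈ F, x = n}

/-- `FSin A B = ⋃ j ∈ A, FSeq j B`. -/
def FSin (A B : Set ℕ) : Set ℕ := ⋃ j ∈ A, FSeq j B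

/-- A set is monochromatic under a coloring `c` if `c` is constant on it. -/
def MonoChr {r : ℕ} (c : ℕ → Fin r) (S : Set ℕ) : Prop :=
  ∀ x ∈ S, ∀ y ∈ S, c x = c y

/-- The gaps of `n`: pairs of consecutive exponents in the binary expansion. -/
def gaps (n : ℕ) : Set (ℕ × ℕ) :=
  {p | n.testBit p.1 ∧ n.testBit p.2 ∧ p.1 < p.2 ∧
    ∀ t, p.1 < t → t < p.2 → ¬ n.testBit t}

/-- The gap `p` of `n` is short in `n` (w.r.t. `K` and approximation `Kapp`). -/
def ShortGap (K : Set ℕ) (Kapp : ℕ → Set ℕ) (n : ℕ) (p : ℕ × ℕ) : Prop :=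
  p ∈ gaps n ∧ ∃ x ≤ p.1, x ∈ K ∧ x ∉ Kapp p.2

/-- The gap `p` of `n` is very short in `n` (w.r.t. approximation `Kapp`). -/
def VeryShortGap (Kapp : ℕ → Set ℕ) (n : ℕ) (p : ℕ × ℕ) : Prop :=
  p ∈ gaps n ∧ ∃ x ≤ p.1, x ∈ Kapp (mu n) ∧ x ∉ Kapp p.2

/-- `SG K Kapp n` is the number of short gaps of `n`. -/
noncomputable def SG (K : Set ℕ) (Kapp : ℕ → Set ℕ) (n : ℕ) : ℕ :=
  {p : ℕ × ℕ | ShortGap K Kapp n p}.ncard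

/-- `VSG Kapp n` is the number of very short gaps of `n`. -/
noncomputable def VSG (Kapp : ℕ → Set ℕ) (n : ℕ) : ℕ :=
  {p : ℕ × ℕ | VeryShortGap Kapp n p}.ncard

theorem ht_a_2a_3a_implies_ht_le_three (a : ℕ) (ha : 0 < a)
    (hyp : ∀ c : ℕ → Fin 2, ∃ H : Set ℕ, H.Infinite ∧ ApartSet H ∧
      MonoChr c (FSin {a, 2 * a, 3 * a} H)) :
    ∀ c : ℕ → Fin 2, ∃ H : Set ℕ, H.Infinite ∧ (∀ x ∈ H, 0 < x) ∧
      MonoChr c (FSin {1, 2, 3} H) := by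
  intro c
  obtain ⟨H, hHinf, ⟨hpos, -⟩, hmono⟩ := hyp c
  have hinf : {n | n ∈ H}.Infinite := hHinf
  set e : ℕ → ℕ := Nat.nth (· ∈ H) with he
  have hemono : StrictMono e := Nat.nth_strictMono hinf
  have hemem : ∀ n, e n ∈ H := fun n => Nat.nth_mem_of_infinite hinf n
  have heinj : Function.Injective e := hemono.injective
  set s : ℕ → ℕ := fun i => ∑ t ∈ Finset.Ico (a * i) (a * i + a), e t with hs
  have hsrange : ∀ i, s i = ∑ j ∈ Finset.range a, e (a * i + j) := by
    intro i
    show ∑ t ∈ Finset.Ico (a * i) (a * i + a), e t = _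
    rw [Finset.sum_Ico_eq_sum_range]
    simp
  have hsmono : StrictMono s := by
    intro i k hik
    rw [hsrange, hsrange]
    apply Finset.sum_lt_sum_of_nonempty
    · exact ⟨0, Finset.mem_range.mpr ha⟩
    · intro j _
      apply hemono
      have : a * i < a * k := (mul_lt_mul_iff_right₀ ha).mpr hik
      omega
  have hdisj : ∀ i k : ℕ, i ≠ k →
      Disjoint (Finset.Ico (a * i) (a * i + a)) (Finset.Ico (a * k) (a * k + a)) := by
    intro i k hik
    rw [Finset.disjoint_left]
    intro t ht ht'
    rw [Finset.mem_Ico] at ht ht'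
    rcases Nat.lt_or_ge i k with h | h
    · have h1 : a * (i + 1) ≤ a * k := Nat.mul_le_mul_left a h
      have h2 : a * (i + 1) = a * i + a := by ring
      omega
    · have hk : k < i := lt_of_le_of_ne h (Ne.symm hik)
      have h1 : a * (k + 1) ≤ a * i := Nat.mul_le_mul_left a hk
      have h2 : a * (k + 1) = a * k + a := by ring
      omega
  have key : ∀ n ∈ FSin {1, 2, 3} (Set.range s), n ∈ FSin {a, 2 * a, 3 * a} H := by
    intro n hn
    simp only [FSin, Set.mem_iUnion] at hn ⊢
    obtain ⟨j, hj, F, hFsub, hFcard, hFsum⟩ := hn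
    have hFsub' : ↑F ⊆ s '' Set.univ := by rwa [Set.image_univ]
    obtain ⟨I, -, hI⟩ := Finset.subset_set_image_iff.mp hFsub'
    have hIcard : I.card = j := by
      rw [← hFcard, ← hI, Finset.card_image_of_injective _ hsmono.injective]
    set G : Finset ℕ := (I.biUnion fun i => Finset.Ico (a * i) (a * i + a)).image e with hG
    have hGsub : ↑G ⊆ H := by
      intro x hx
      simp only [hG, Finset.coe_image, Set.mem_image] at hx
      obtain ⟨t, -, rfl⟩ := hx
      exact hemem t
    have hGcard : G.card = j * a := by
      rw [hG, Finset.card_image_of_injective _ heinj,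
        Finset.card_biUnion (fun i _ k _ h => hdisj i k h)]
      simp only [Nat.card_Ico]
      have hconst : ∀ i ∈ I, a * i + a - a * i = a := fun i _ => by omega
      rw [Finset.sum_congr rfl hconst, Finset.sum_const, hIcard, smul_eq_mul]
    have hGsum : ∑ x ∈ G, x = n := by
      rw [hG, Finset.sum_image (fun x _ y _ h => heinj h),
        Finset.sum_biUnion (fun i _ k _ h => hdisj i k h)]
      rw [← hFsum, ← hI, Finset.sum_image (fun x _ y _ h => hsmono.injective h)]
    refine ⟨j * a, ?_, G, hGsub, hGcard, hGsum⟩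
    simp only [Set.mem_insert_iff, Set.mem_singleton_iff] at hj ⊢
    rcases hj with rfl | rfl | rfl
    · left; ring
    · right; left; ring
    · right; right; ring
  refine ⟨Set.range s, Set.infinite_range_of_injective hsmono.injective, ?_, ?_⟩
  · rintro x ⟨i, rfl⟩
    apply Finset.sum_pos
    · intro t _
      exact hpos _ (hemem t)
    · exact ⟨a * i, Finset.mem_Ico.mpr ⟨le_rfl, by omega⟩⟩
  · intro x hx y hy
    exact hmono x (key x hx) y (key y hy)
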